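/- For x ∈ V(ℝ) with Q(x) ≠ 0, the set D_x = {z ∈ D : (x, w(z)) = 0} has exactly two elements if Q(x) > 0, and is empty if Q(x) < 0. -/

import Mathlib

open Matrix

/-- `w(z) = [[z, -z²],[1, -z]]`, a representative of the point of `D` attached to
`z ∈ ℂ∖ℝ`. -/
noncomputable def wvec (z : ℂ) : Matrix (Fin 2) (Fin 2) ℂ := !![z, -z ^ 2; 1, -z]

/-- The ℂ-bilinear extension `(x,y) = tr(x·yᶥ)`, `yᶥ = tr(y)·1 - y`. -/
noncomputable def cpair (x y : Matrix (Fin 2) (Fin 2) ℂ) : ℂ :=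
  Matrix.trace (x * (Matrix.trace y • (1 : Matrix (Fin 2) (Fin 2) ℂ) - y))

lemma cpair_eval (x : Matrix (Fin 2) (Fin 2) ℝ) (htr : Matrix.trace x = 0) (z : ℂ) :
    cpair (x.map Complex.ofReal) (wvec z)
      = (x 1 0 : ℂ) * z ^ 2 - 2 * (x 0 0 : ℂ) * z - (x 0 1 : ℂ) := by
  have h11 : x 1 1 = - x 0 0 := by
    have : x 0 0 + x 1 1 = 0 := by simpa [Matrix.trace, Fin.sum_univ_two] using htr
    linarith
  simp [cpair, wvec, Matrix.trace, Fin.sum_univ_two, Matrix.mul_apply, Matrix.map_apply,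
    Matrix.one_apply, h11]
  ring

/-- for `x ∈ V(ℝ)` with `Q(x) = det x ≠ 0`, the set
`D_x = {z ∈ D : (x, w(z)) = 0}` (with `D` identified with `ℂ∖ℝ`) has exactly two
elements if `Q(x) > 0` and is empty if `Q(x) < 0`. -/
theorem Dx_two_points_or_empty (x : Matrix (Fin 2) (Fin 2) ℝ)
    (htr : Matrix.trace x = 0) :
    (0 < x.det → ∃ z₁ z₂ : ℂ, z₁ ≠ z₂ ∧
      {z : ℂ | z.im ≠ 0 ∧ cpair (x.map Complex.ofReal) (wvec z) = 0} = {z₁, z₂}) ∧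
    (x.det < 0 →
      {z : ℂ | z.im ≠ 0 ∧ cpair (x.map Complex.ofReal) (wvec z) = 0} = ∅) := by
  obtain ⟨a, ha⟩ : ∃ a, x 0 0 = a := ⟨_, rfl⟩
  obtain ⟨b, hb⟩ : ∃ b, x 0 1 = b := ⟨_, rfl⟩
  obtain ⟨c, hc⟩ : ∃ c, x 1 0 = c := ⟨_, rfl⟩
  have h11 : x 1 1 = -a := by
    have : x 0 0 + x 1 1 = 0 := by simpa [Matrix.trace, Fin.sum_univ_two] using htr
    linarith [ha ▸ this]
  have hdet : x.det = -a ^ 2 - b * c := by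
    rw [Matrix.det_fin_two, h11, ha, hb, hc]; ring
  have keyval : ∀ z : ℂ, cpair (x.map Complex.ofReal) (wvec z)
      = (c : ℂ) * z ^ 2 - 2 * (a : ℂ) * z - (b : ℂ) := by
    intro z; rw [cpair_eval x htr z, ha, hb, hc]
  constructor
  · intro hpos
    have hc0 : c ≠ 0 := by
      intro h; rw [hdet, h] at hpos; nlinarith
    have hcc : (c : ℂ) ≠ 0 := by exact_mod_cast hc0
    set s := Real.sqrt x.det with hs
    have hs0 : 0 < s := Real.sqrt_pos.mpr hpos
    have hs2 : s ^ 2 = -a ^ 2 - b * c := by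
      rw [← hdet]; exact Real.sq_sqrt hpos.le
    have hs2c : (s : ℂ) ^ 2 = -(a : ℂ) ^ 2 - (b : ℂ) * (c : ℂ) := by exact_mod_cast hs2
    have hsc : s / c ≠ 0 := div_ne_zero hs0.ne' hc0
    refine ⟨(a / c : ℝ) + (s / c : ℝ) * Complex.I, (a / c : ℝ) - (s / c : ℝ) * Complex.I, ?_, ?_⟩
    · intro h
      have him := congrArg Complex.im h
      simp at him
      exact hsc (by linarith)
    · ext z
      simp only [Set.mem_setOf_eq, Set.mem_insert_iff, Set.mem_singleton_iff]
      have key : cpair (x.map Complex.ofReal) (wvec z)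
          = (c : ℂ) * (z - ((a / c : ℝ) + (s / c : ℝ) * Complex.I))
              * (z - ((a / c : ℝ) - (s / c : ℝ) * Complex.I)) := by
        rw [keyval z]
        push_cast
        field_simp
        linear_combination (s : ℂ) ^ 2 * Complex.I_sq - hs2c
      constructor
      · rintro ⟨him, heq⟩
        rw [key] at heq
        rcases mul_eq_zero.mp heq with h' | h'
        · rcases mul_eq_zero.mp h' with h'' | h''
          · exact absurd h'' hcc
          · left; exact sub_eq_zero.mp h''
        · right; exact sub_eq_zero.mp h'
      · rintro (rfl | rfl)
        · exact ⟨by simp [hsc], by rw [key]; ring⟩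
        · exact ⟨by simpa using hsc, by rw [key]; ring⟩
  · intro hneg
    ext z
    simp only [Set.mem_setOf_eq, Set.mem_empty_iff_false, iff_false, not_and]
    intro him heq
    rw [keyval z] at heq
    rw [Complex.ext_iff] at heq
    obtain ⟨h1, h2⟩ := heq
    simp [Complex.add_re, Complex.mul_re, Complex.mul_im, pow_two] at h1 h2
    have hacp : a = c * z.re := by
      have h2' : z.im * (c * z.re - a) = 0 := by nlinarith
      rcases mul_eq_zero.mp h2' with h' | h'
      · exact absurd h' him
      · linarith
    rw [hacp] at h1
    have h4 : b * c = -(c * z.re) ^ 2 - (c * z.im) ^ 2 := by linear_combination (-c) * h1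
    rw [hdet, hacp] at hneg
    have hq2 : 0 < z.im ^ 2 := by positivity
    nlinarith [sq_nonneg (c * z.im), h4, hneg]
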